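/- Let W be a finite group, X a finitely generated free ℤ-module with a W-action, γ ∈ W a fixed element, and M = ℤ_ℓ[W] ⊗_ℤ X with the two commuting actions described in the context. Let W act on Hom_{ℤ_ℓ}(M, ℤ_ℓ) by (w·φ)(m) = φ(w⁻¹·m). Then the assignment φ ↦ (x ↦ φ(1 ⊗ x)) defines a ℤ_ℓ-linear isomorphism from the module of W-invariant functionals φ ∈ Hom_{ℤ_ℓ}(M, ℤ_ℓ) that vanish on (1−γ∘)M onto the module of functionals in Hom_{ℤ_ℓ}(X_ℓ, ℤ_ℓ) that vanish on (1−γ)X_ℓ; that is, Hom_{ℤ_ℓ}(X_ℓ/(1−γ)X_ℓ, ℤ_ℓ) ≅ (Hom_{ℤ_ℓ}(M/(1−γ∘)M, ℤ_ℓ))^W. -/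

import Mathlib

/-!
Statement 1.  With `M = ℤ_ℓ[W] ⊗_ℤ X` carrying the two commuting actions
`w·(a ⊗ x) = (a w⁻¹) ⊗ (w·x)` and `γ∘(a ⊗ x) = (γa) ⊗ x`, and with `W` acting on
`Hom_{ℤ_ℓ}(M, ℤ_ℓ)` by `(w·φ)(m) = φ(w⁻¹·m)`, the assignment `φ ↦ (x ↦ φ(1 ⊗ x))`
is a `ℤ_ℓ`-linear isomorphism from the module of `W`-invariant functionals on `M`
vanishing on `(1−γ∘)M` onto the module of functionals on `X_ℓ` vanishing on `(1−γ)X_ℓ`.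
-/

open TensorProduct

set_option maxHeartbeats 1000000
set_option synthInstance.maxHeartbeats 400000

namespace Stmt1

noncomputable section

variable (ℓ : ℕ) [Fact ℓ.Prime]
variable (W : Type*) [Group W] [Fintype W]
variable (X : Type*) [AddCommGroup X] [DistribMulAction W X]

/-- The action of `w : W` on `X`, as a `ℤ`-linear map. -/
def actX (w : W) : X →ₗ[ℤ] X :=
  (DistribMulAction.toAddMonoidHom X w).toIntLinearMap

/-- `M = ℤ_ℓ[W] ⊗_ℤ X`. -/
abbrev Mmod := MonoidAlgebra ℤ_[ℓ] W ⊗[ℤ] X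

/-- `X_ℓ = ℤ_ℓ ⊗_ℤ X`. -/
abbrev Xl := ℤ_[ℓ] ⊗[ℤ] X

/-- The action `γ∘` on `M`: `γ∘(a ⊗ x) = (γa) ⊗ x`. -/
def gammaAct (γ : W) : Mmod ℓ W X →ₗ[ℤ_[ℓ]] Mmod ℓ W X :=
  AlgebraTensorModule.map
    (LinearMap.mulLeft ℤ_[ℓ] (MonoidAlgebra.of ℤ_[ℓ] W γ)) (LinearMap.id : X →ₗ[ℤ] X)

/-- The `W`-action on `M`: `w·(a ⊗ x) = (a w⁻¹) ⊗ (w·x)`. -/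
def wAct (w : W) : Mmod ℓ W X →ₗ[ℤ_[ℓ]] Mmod ℓ W X :=
  AlgebraTensorModule.map
    (LinearMap.mulRight ℤ_[ℓ] (MonoidAlgebra.of ℤ_[ℓ] W w⁻¹)) (actX W X w)

/-- The action of `γ : W` on `X_ℓ = ℤ_ℓ ⊗_ℤ X`, base-changed from `X`. -/
def actXl (γ : W) : Xl ℓ X →ₗ[ℤ_[ℓ]] Xl ℓ X :=
  LinearMap.baseChange ℤ_[ℓ] (actX W X γ)

/-- The `ℤ_ℓ`-linear map `X_ℓ → M`, `x ↦ 1 ⊗ x` (on pure tensors `c ⊗ y ↦ (c·1) ⊗ y`). -/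
def unitMap : Xl ℓ X →ₗ[ℤ_[ℓ]] Mmod ℓ W X :=
  AlgebraTensorModule.map
    (LinearMap.toSpanSingleton ℤ_[ℓ] (MonoidAlgebra ℤ_[ℓ] W) 1)
    (LinearMap.id : X →ₗ[ℤ] X)

/-- The `ℤ_ℓ`-submodule of `Hom_{ℤ_ℓ}(M, ℤ_ℓ)` of `W`-invariant functionals (for the action
`(w·φ)(m) = φ(w⁻¹·m)`) that vanish on `(1−γ∘)M`; equivalently,
`Hom_{ℤ_ℓ}(M/(1−γ∘)M, ℤ_ℓ)^W`. -/
def S1 (γ : W) : Submodule ℤ_[ℓ] (Mmod ℓ W X →ₗ[ℤ_[ℓ]] ℤ_[ℓ]) where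
  carrier := {φ | (∀ (w : W) (m : Mmod ℓ W X), φ (wAct ℓ W X w m) = φ m) ∧
      (∀ m : Mmod ℓ W X, φ (m - gammaAct ℓ W X γ m) = 0)}
  add_mem' := by
    rintro φ ψ ⟨h1, h2⟩ ⟨h3, h4⟩
    exact ⟨fun w m => by simp [h1 w m, h3 w m], fun m => by simp [h2 m, h4 m]⟩
  zero_mem' := ⟨fun _ _ => rfl, fun _ => rfl⟩
  smul_mem' := by
    rintro c φ ⟨h1, h2⟩
    exact ⟨fun w m => by simp [h1 w m], fun m => by simp [h2 m]⟩

/-- The `ℤ_ℓ`-submodule of `Hom_{ℤ_ℓ}(X_ℓ, ℤ_ℓ)` of functionals vanishing on `(1−γ)X_ℓ`;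
equivalently, `Hom_{ℤ_ℓ}(X_ℓ/(1−γ)X_ℓ, ℤ_ℓ)`. -/
def S2 (γ : W) : Submodule ℤ_[ℓ] (Xl ℓ X →ₗ[ℤ_[ℓ]] ℤ_[ℓ]) where
  carrier := {ψ | ∀ x : Xl ℓ X, ψ (x - actXl ℓ W X γ x) = 0}
  add_mem' := by
    intro ψ₁ ψ₂ h1 h2 x
    simp [h1 x, h2 x]
  zero_mem' := fun _ => rfl
  smul_mem' := by
    intro c ψ h x
    simp [h x]

@[simp] lemma actX_apply (w : W) (x : X) : actX W X w x = w • x := rfl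

lemma actX_one : actX W X 1 = LinearMap.id := by
  ext x; simp

lemma actX_mul (u v : W) : actX W X (u * v) = (actX W X u).comp (actX W X v) := by
  ext x; simp [mul_smul]

/-- The `W`-action on `X_ℓ` as a monoid hom into endomorphisms. -/
def actXlHom : W →* Module.End ℤ_[ℓ] (Xl ℓ X) where
  toFun w := actXl ℓ W X w
  map_one' := by
    refine LinearMap.ext fun z => ?_
    show LinearMap.baseChange ℤ_[ℓ] (actX W X 1) z = z
    rw [actX_one]
    induction z using TensorProduct.induction_on with
    | zero => simp
    | tmul c x => simp
    | add a b ha hb => simp only [map_add, ha, hb]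
  map_mul' u v := by
    simp only [actXl, actX_mul, LinearMap.baseChange_comp]
    rfl

/-- The induced algebra map `ℤ_ℓ[W] → End(X_ℓ)`. -/
def rho : MonoidAlgebra ℤ_[ℓ] W →ₐ[ℤ_[ℓ]] Module.End ℤ_[ℓ] (Xl ℓ X) :=
  MonoidAlgebra.lift ℤ_[ℓ] _ W (actXlHom ℓ W X)

@[simp] lemma rho_of (w : W) : rho ℓ W X (MonoidAlgebra.of ℤ_[ℓ] W w) = actXl ℓ W X w :=
  MonoidAlgebra.lift_of _ _

@[simp] lemma rho_single (w : W) :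
    rho ℓ W X (MonoidAlgebra.single w (1 : ℤ_[ℓ])) = actXl ℓ W X w := rho_of ℓ W X w

/-- `x ↦ 1 ⊗ x` as a `ℤ`-linear map `X → X_ℓ`. -/
def iota : X →ₗ[ℤ] Xl ℓ X := TensorProduct.mk ℤ ℤ_[ℓ] X 1

/-- The bilinear map `(a, x) ↦ ρ(a)(1 ⊗ x)`. -/
def Bmap : MonoidAlgebra ℤ_[ℓ] W →ₗ[ℤ_[ℓ]] X →ₗ[ℤ] Xl ℓ X where
  toFun a := ((rho ℓ W X a).restrictScalars ℤ).comp (iota ℓ X)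
  map_add' a b := by ext x; simp
  map_smul' c a := by ext x; simp

/-- The averaging map `θ : M → X_ℓ`, `δ_w ⊗ x ↦ 1 ⊗ w•x`. -/
def theta : Mmod ℓ W X →ₗ[ℤ_[ℓ]] Xl ℓ X :=
  TensorProduct.AlgebraTensorModule.lift (Bmap ℓ W X)

@[simp] lemma theta_tmul (a : MonoidAlgebra ℤ_[ℓ] W) (x : X) :
    theta ℓ W X (a ⊗ₜ x) = rho ℓ W X a ((1 : ℤ_[ℓ]) ⊗ₜ x) := rfl

lemma theta_wAct (w : W) (m : Mmod ℓ W X) :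
    theta ℓ W X (wAct ℓ W X w m) = theta ℓ W X m := by
  induction m using TensorProduct.induction_on with
  | zero => simp
  | tmul a x =>
      simp only [wAct, AlgebraTensorModule.map_tmul, theta_tmul, LinearMap.mulRight_apply,
        map_mul, LinearMap.id_coe, id_eq]
      simp [Module.End.mul_apply, actXl, smul_smul]
  | add m₁ m₂ h₁ h₂ => simp [map_add, h₁, h₂]

lemma theta_gammaAct (γ : W) (m : Mmod ℓ W X) :
    theta ℓ W X (gammaAct ℓ W X γ m) = actXl ℓ W X γ (theta ℓ W X m) := by
  induction m using TensorProduct.induction_on with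
  | zero => simp
  | tmul a x =>
      simp only [gammaAct, AlgebraTensorModule.map_tmul, theta_tmul, LinearMap.mulLeft_apply,
        map_mul, LinearMap.id_coe, id_eq]
      simp [Module.End.mul_apply]
  | add m₁ m₂ h₁ h₂ => simp [map_add, h₁, h₂]

lemma theta_unitMap (x : Xl ℓ X) : theta ℓ W X (unitMap ℓ W X x) = x := by
  induction x using TensorProduct.induction_on with
  | zero => simp
  | tmul c x =>
      simp only [unitMap, AlgebraTensorModule.map_tmul, theta_tmul,
        LinearMap.toSpanSingleton_apply, LinearMap.id_coe, id_eq, map_smul]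
      simp [smul_tmul']
  | add x₁ x₂ h₁ h₂ => simp [map_add, h₁, h₂]

lemma unitMap_actXl (γ : W) (x : Xl ℓ X) :
    unitMap ℓ W X (actXl ℓ W X γ x) =
      gammaAct ℓ W X γ (wAct ℓ W X γ (unitMap ℓ W X x)) := by
  induction x using TensorProduct.induction_on with
  | zero => simp
  | tmul c x =>
      simp only [actXl, LinearMap.baseChange_tmul, unitMap, AlgebraTensorModule.map_tmul,
        LinearMap.toSpanSingleton_apply, LinearMap.id_coe, id_eq, wAct, gammaAct,
        LinearMap.mulRight_apply, LinearMap.mulLeft_apply, actX_apply]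
      congr 1
      simp [smul_mul_assoc, mul_smul_comm, MonoidAlgebra.one_def,
        MonoidAlgebra.smul_single', MonoidAlgebra.single_mul_single]
  | add x₁ x₂ h₁ h₂ => simp [map_add, h₁, h₂]

lemma unitMap_theta (φ : Mmod ℓ W X →ₗ[ℤ_[ℓ]] ℤ_[ℓ])
    (hφ : ∀ (w : W) (m : Mmod ℓ W X), φ (wAct ℓ W X w m) = φ m) (m : Mmod ℓ W X) :
    φ (unitMap ℓ W X (theta ℓ W X m)) = φ m := by
  induction m using TensorProduct.induction_on with
  | zero => simp
  | tmul a x =>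
      induction a using MonoidAlgebra.induction_on with
      | of w =>
          rw [theta_tmul, rho_of]
          have : unitMap ℓ W X (actXl ℓ W X w ((1 : ℤ_[ℓ]) ⊗ₜ x)) =
              wAct ℓ W X w (MonoidAlgebra.of ℤ_[ℓ] W w ⊗ₜ x) := by
            simp only [actXl, LinearMap.baseChange_tmul, unitMap, AlgebraTensorModule.map_tmul,
              LinearMap.toSpanSingleton_apply, LinearMap.id_coe, id_eq, wAct,
              LinearMap.mulRight_apply, actX_apply]
            congr 1
            rw [one_smul, ← map_mul, mul_inv_cancel, MonoidAlgebra.of_apply,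
              MonoidAlgebra.one_def]
          rw [this, hφ]
      | add a b ha hb =>
          simp only [add_tmul, map_add] at *
          rw [ha, hb]
      | smul c a ha =>
          rw [← smul_tmul']
          simp only [map_smul]
          rw [ha]
  | add m₁ m₂ h₁ h₂ => simp only [map_add, h₁, h₂]

/-- `Hom_{ℤ_ℓ}(X_ℓ/(1−γ)X_ℓ, ℤ_ℓ) ≅ (Hom_{ℤ_ℓ}(M/(1−γ∘)M, ℤ_ℓ))^W`,
via `φ ↦ (x ↦ φ(1 ⊗ x))`. -/
theorem restriction_equiv [Module.Free ℤ X] [Module.Finite ℤ X] (γ : W) :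
    ∃ e : S1 ℓ W X γ ≃ₗ[ℤ_[ℓ]] S2 ℓ W X γ,
      ∀ (φ : S1 ℓ W X γ) (x : Xl ℓ X),
        (e φ : Xl ℓ X →ₗ[ℤ_[ℓ]] ℤ_[ℓ]) x =
          (φ : Mmod ℓ W X →ₗ[ℤ_[ℓ]] ℤ_[ℓ]) (unitMap ℓ W X x) := by

  classical
  have mem2 : ∀ φ : S1 ℓ W X γ,
      ((φ : Mmod ℓ W X →ₗ[ℤ_[ℓ]] ℤ_[ℓ]).comp (unitMap ℓ W X)) ∈ S2 ℓ W X γ := by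
    rintro ⟨φ, hinv, hvan⟩ x
    have key : ∀ m : Mmod ℓ W X, φ (gammaAct ℓ W X γ m) = φ m := by
      intro m
      have := hvan m
      simp only [map_sub, sub_eq_zero] at this
      exact this.symm
    simp only [LinearMap.comp_apply, map_sub, unitMap_actXl, key, hinv, sub_self]
  have mem1 : ∀ ψ : S2 ℓ W X γ,
      ((ψ : Xl ℓ X →ₗ[ℤ_[ℓ]] ℤ_[ℓ]).comp (theta ℓ W X)) ∈ S1 ℓ W X γ := by
    rintro ⟨ψ, hψ⟩
    constructor
    · intro w m
      simp only [LinearMap.comp_apply, theta_wAct]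
    · intro m
      have := hψ (theta ℓ W X m)
      simp only [map_sub] at this ⊢
      simpa [theta_gammaAct] using this
  refine ⟨{
      toFun := fun φ => ⟨_, mem2 φ⟩
      invFun := fun ψ => ⟨_, mem1 ψ⟩
      map_add' := fun φ ψ => Subtype.ext (LinearMap.ext fun m => rfl)
      map_smul' := fun c φ => Subtype.ext (LinearMap.ext fun m => rfl)
      left_inv := ?_
      right_inv := ?_ }, fun φ x => rfl⟩
  · rintro ⟨φ, hinv, hvan⟩
    refine Subtype.ext (LinearMap.ext fun m => ?_)
    exact unitMap_theta ℓ W X φ hinv m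
  · rintro ⟨ψ, hψ⟩
    refine Subtype.ext (LinearMap.ext fun x => ?_)
    simp only [LinearMap.comp_apply, theta_unitMap]

end

end Stmt1
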